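/- Let P be an n×n stochastic matrix partitioned into blocks P = [[A, B],[C, D]] with A of size k×k. Suppose there exists p such that the first k columns of P^p are entrywise positive, and no other column of any power of P is positive. Then B = 0 and A is primitive (some power of A is entrywise positive). -/

import Mathlib

open Matrix

theorem stmt9 {k m : ℕ} (A : Matrix (Fin k) (Fin k) ℝ) (B : Matrix (Fin k) (Fin m) ℝ)
    (C : Matrix (Fin m) (Fin k) ℝ) (D : Matrix (Fin m) (Fin m) ℝ)
    (hnonneg : ∀ i j, 0 ≤ Matrix.fromBlocks A B C D i j)
    (hrow : ∀ i, ∑ j, Matrix.fromBlocks A B C D i j = 1)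
    (hp : ∃ p : ℕ, 0 < p ∧ ∀ (j : Fin k) (i : Fin k ⊕ Fin m),
        0 < (Matrix.fromBlocks A B C D ^ p) i (Sum.inl j))
    (hnot : ∀ (q : ℕ), 0 < q → ∀ (j : Fin m),
        ¬ ∀ i, 0 < (Matrix.fromBlocks A B C D ^ q) i (Sum.inr j)) :
    B = 0 ∧ ∃ t : ℕ, 0 < t ∧ ∀ i j, 0 < (A ^ t) i j := by
  set P := Matrix.fromBlocks A B C D with hP
  have hpownn : ∀ (q : ℕ) (i j : Fin k ⊕ Fin m), 0 ≤ (P ^ q) i j := by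
    intro q
    induction q with
    | zero =>
      intro i j
      simp only [pow_zero, Matrix.one_apply]
      split <;> norm_num
    | succ q ih =>
      intro i j
      rw [pow_succ, Matrix.mul_apply]
      exact Finset.sum_nonneg fun y _ => mul_nonneg (ih i y) (hnonneg y j)
  obtain ⟨p, hp0, hcol⟩ := hp
  have hB : B = 0 := by
    by_contra hBne
    obtain ⟨i, j, hij⟩ : ∃ i j, B i j ≠ 0 := by
      by_contra h
      push_neg at h
      exact hBne (by ext i j; simp [h i j])
    have hBpos : 0 < B i j := by
      have := hnonneg (Sum.inl i) (Sum.inr j)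
      simp only [hP, Matrix.fromBlocks_apply₁₂] at this
      exact lt_of_le_of_ne this (Ne.symm hij)
    apply hnot (p + 1) (Nat.succ_pos p) j
    intro x
    rw [pow_succ, Matrix.mul_apply]
    apply Finset.sum_pos' (fun y _ => mul_nonneg (hpownn p x y) (hnonneg y _))
    refine ⟨Sum.inl i, Finset.mem_univ _, mul_pos (hcol i x) ?_⟩
    simpa [hP] using hBpos
  subst hB
  have hblock : ∀ (q : ℕ) (i j : Fin k), (P ^ q) (Sum.inl i) (Sum.inl j) = (A ^ q) i j := by
    intro q
    induction q with
    | zero =>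
      intro i j
      simp [Matrix.one_apply, Sum.inl.injEq]
    | succ q ih =>
      intro i j
      rw [pow_succ', Matrix.mul_apply, pow_succ', Matrix.mul_apply,
        Fintype.sum_sum_type]
      simp only [hP, Matrix.fromBlocks_apply₁₁, Matrix.fromBlocks_apply₁₂]
      simp only [hP] at ih
      simp [ih]
  refine ⟨rfl, p, hp0, fun i j => ?_⟩
  rw [← hblock p i j]
  exact hcol j (Sum.inl i)
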